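/- Let ω : ℕ → ℂ (indexed by n ≥ 1) be a sequence with liminf_{n→∞}(Re ω_{n+1} − Re ω_n) = γ for some γ > 0, and for T > 0 let G(w) = −Tπ/(T²w² − π²). Then for every ε ∈ (0,1), every T > 2π/(γ√(1−ε)) and every a > 0 there exists n₀ ∈ ℕ such that a|G(ω_n)| ≤ πε/(Tγ²(1−ε)) for every n ≥ n₀, and moreover a Σ_{n=n₀}^∞ |G(ω_n)| ≤ πε/(Tγ²(1−ε)). -/

import Mathlib

open Filter Complex

/-- If `liminf (Re ω_{n+1} - Re ω_n) = γ > 0` and `G(w) = -Tπ/(T²w² - π²)`, then for every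
`ε ∈ (0,1)`, every `T > 2π/(γ√(1-ε))` and every `a > 0` there exists `n₀` such that
`a|G(ω_n)| ≤ πε/(Tγ²(1-ε))` for every `n ≥ n₀`, and
`a Σ_{n=n₀}^∞ |G(ω_n)| ≤ πε/(Tγ²(1-ε))`. -/
theorem stmt4 (ω : ℕ → ℂ) (γ : ℝ) (hγ : 0 < γ)
    (hlim : Filter.atTop.liminf (fun n : ℕ => (ω (n + 1)).re - (ω n).re) = γ) :
    ∀ ε ∈ Set.Ioo (0:ℝ) 1, ∀ T : ℝ, T > 2 * Real.pi / (γ * Real.sqrt (1 - ε)) →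
    ∀ a : ℝ, 0 < a →
    ∃ n₀ : ℕ,
      (∀ n : ℕ, n₀ ≤ n →
        a * ‖(-((T : ℂ) * (Real.pi : ℂ)) / ((T : ℂ)^2 * (ω n)^2 - (Real.pi : ℂ)^2))‖
          ≤ Real.pi * ε / (T * γ^2 * (1 - ε)))
      ∧ Summable (fun n : ℕ =>
          ‖(-((T : ℂ) * (Real.pi : ℂ))
            / ((T : ℂ)^2 * (ω (n₀ + n))^2 - (Real.pi : ℂ)^2))‖)
      ∧ a * ∑' n : ℕ,
          ‖(-((T : ℂ) * (Real.pi : ℂ))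
            / ((T : ℂ)^2 * (ω (n₀ + n))^2 - (Real.pi : ℂ)^2))‖
          ≤ Real.pi * ε / (T * γ^2 * (1 - ε)) := by
  intro ε hε T hT a ha
  obtain ⟨hε0, hε1⟩ := hε
  have hsq : 0 < Real.sqrt (1 - ε) := Real.sqrt_pos.2 (by linarith)
  have hπ : (0:ℝ) < Real.pi := Real.pi_pos
  have hT0 : 0 < T := lt_trans (div_pos (by linarith) (mul_pos hγ hsq)) hT
  set t : ℝ := Real.pi * ε / (T * γ^2 * (1 - ε)) with ht
  have ht0 : 0 < t := by
    apply div_pos (mul_pos hπ hε0)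
    exact mul_pos (mul_pos hT0 (pow_pos hγ 2)) (by linarith)
  set F : ℕ → ℝ := fun n =>
    ‖(-((T : ℂ) * (Real.pi : ℂ)) / ((T : ℂ)^2 * (ω n)^2 - (Real.pi : ℂ)^2))‖ with hF
  have hFnonneg : ∀ n, 0 ≤ F n := fun n => norm_nonneg _
  -- Step A
  have hev : ∀ᶠ n in atTop, γ/2 ≤ (ω (n+1)).re - (ω n).re := by
    rw [Filter.liminf_eq] at hlim
    set S : Set ℝ := {a | ∀ᶠ n in atTop, a ≤ (ω (n+1)).re - (ω n).re} with hS
    have hne : S.Nonempty := by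
      by_contra h
      rw [Set.not_nonempty_iff_eq_empty] at h
      rw [h, Real.sSup_empty] at hlim
      linarith
    obtain ⟨b, hbS, hb⟩ := exists_lt_of_lt_csSup hne (by rw [hlim]; linarith : γ/2 < sSup S)
    exact hbS.mono (fun n hn => le_trans hb.le hn)
  obtain ⟨N, hN⟩ := eventually_atTop.1 hev
  -- Step B
  have hgrow : ∀ k : ℕ, (ω N).re + k * (γ/2) ≤ (ω (N + k)).re := by
    intro k
    induction k with
    | zero => simp
    | succ k ih =>
      have h2 := hN (N + k) (Nat.le_add_right _ _)
      have h3 : N + k + 1 = N + (k + 1) := by ring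
      rw [← h3]
      push_cast
      linarith
  -- Step C
  obtain ⟨K, hK⟩ := exists_nat_ge ((2 * Real.pi / T - (ω N).re) / (γ/2))
  have hK' : 2 * Real.pi / T ≤ (ω N).re + K * (γ/2) := by
    have := (div_le_iff₀ (by linarith : (0:ℝ) < γ/2)).1 hK
    linarith
  set M := N + K with hM
  set R := (ω N).re + K * (γ/2) with hR
  have hR0 : 0 < R := lt_of_lt_of_le (div_pos (by linarith) hT0) hK'
  set m := min R (γ/2) with hm
  have hm0 : 0 < m := lt_min hR0 (by linarith)
  have hgrow2 : ∀ k : ℕ, R + k * (γ/2) ≤ (ω (M + k)).re := by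
    intro k
    have h := hgrow (K + k)
    have : M + k = N + (K + k) := by rw [hM]; ring
    rw [this]
    calc R + k * (γ/2) = (ω N).re + ((K + k : ℕ) : ℝ) * (γ/2) := by push_cast; ring
      _ ≤ _ := h
  have hre : ∀ k : ℕ, m * (k + 1) ≤ (ω (M + k)).re := by
    intro k
    have h1 := hgrow2 k
    have h2 : m ≤ R := min_le_left _ _
    have h3 : m ≤ γ/2 := min_le_right _ _
    have hk : (0:ℝ) ≤ k := Nat.cast_nonneg k
    have h4 : m * k ≤ (γ/2) * k := mul_le_mul_of_nonneg_right h3 hk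
    calc m * ((k:ℝ) + 1) = m * k + m := by ring
      _ ≤ (γ/2) * k + R := add_le_add h4 h2
      _ = R + k * (γ/2) := by ring
      _ ≤ _ := h1
  have hre2 : ∀ k : ℕ, 2 * Real.pi / T ≤ (ω (M + k)).re := by
    intro k
    have := hgrow2 k
    have hk : (0:ℝ) ≤ k := Nat.cast_nonneg k
    nlinarith
  -- Step D
  have hbound : ∀ k : ℕ, F (M + k) ≤ (4 * Real.pi / (3 * T)) / (m^2 * (k+1)^2) := by
    intro k
    set x := (ω (M + k)).re with hx
    have hx1 : m * (k + 1) ≤ x := hre k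
    have hx2 : 2 * Real.pi / T ≤ x := hre2 k
    have hx0 : 0 < x := lt_of_lt_of_le (mul_pos hm0 (by positivity)) hx1
    have hTx : 2 * Real.pi ≤ T * x := by
      rw [div_le_iff₀ hT0] at hx2; linarith
    have habsω : x ≤ ‖ω (M + k)‖ :=
      le_trans (le_abs_self x) (Complex.abs_re_le_norm _)
    have hden : (3/4) * (T^2 * x^2) ≤
        ‖(T : ℂ)^2 * (ω (M + k))^2 - (Real.pi : ℂ)^2‖ := by
      have h1 : ‖(T : ℂ)^2 * (ω (M + k))^2‖ -
          ‖(Real.pi : ℂ)^2‖ ≤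
          ‖(T : ℂ)^2 * (ω (M + k))^2 - (Real.pi : ℂ)^2‖ := by
        have := norm_sub_norm_le ((T : ℂ)^2 * (ω (M + k))^2) ((Real.pi : ℂ)^2)
        exact this
      have h2 : ‖(T : ℂ)^2 * (ω (M + k))^2‖
          = T^2 * (‖ω (M + k)‖)^2 := by
        rw [norm_mul, norm_pow, norm_pow, Complex.norm_real, Real.norm_eq_abs, abs_of_pos hT0]
      have h3 : ‖(Real.pi : ℂ)^2‖ = Real.pi^2 := by
        rw [norm_pow, Complex.norm_real, Real.norm_eq_abs, abs_of_pos hπ]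
      have h4 : x^2 ≤ (‖ω (M + k)‖)^2 :=
        pow_le_pow_left₀ hx0.le habsω 2
      have h5 : 4 * Real.pi^2 ≤ T^2 * x^2 := by
        have := mul_le_mul hTx hTx (by positivity) (by positivity)
        nlinarith
      have h6 : T^2 * x^2 ≤ T^2 * (‖ω (M + k)‖)^2 :=
        mul_le_mul_of_nonneg_left h4 (by positivity)
      rw [h2, h3] at h1
      linarith
    have hnum : ‖(-((T : ℂ) * (Real.pi : ℂ)))‖ = T * Real.pi := by
      rw [norm_neg, norm_mul, Complex.norm_real, Complex.norm_real, Real.norm_eq_abs, Real.norm_eq_abs,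
        abs_of_pos hT0, abs_of_pos hπ]
    have hFval : F (M + k) = T * Real.pi /
        ‖(T : ℂ)^2 * (ω (M + k))^2 - (Real.pi : ℂ)^2‖ := by
      rw [hF]; simp only []
      rw [norm_div, hnum]
    rw [hFval]
    have hd0 : 0 < (3/4) * (T^2 * x^2) :=
      mul_pos (by norm_num) (mul_pos (pow_pos hT0 2) (pow_pos hx0 2))
    have hmk0 : 0 < m^2 * ((k:ℝ)+1)^2 :=
      mul_pos (pow_pos hm0 2) (pow_pos (by positivity) 2)
    have hmx : m^2 * ((k:ℝ)+1)^2 ≤ x^2 := by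
      calc m^2 * ((k:ℝ)+1)^2 = (m * ((k:ℝ)+1))^2 := by ring
        _ ≤ x^2 := pow_le_pow_left₀ (by positivity) hx1 2
    calc T * Real.pi / ‖(T : ℂ)^2 * (ω (M + k))^2 - (Real.pi : ℂ)^2‖
        ≤ T * Real.pi / ((3/4) * (T^2 * x^2)) :=
          div_le_div_of_nonneg_left (mul_pos hT0 hπ).le hd0 hden
      _ = (4 * Real.pi / (3 * T)) / x^2 := by
          field_simp
      _ ≤ (4 * Real.pi / (3 * T)) / (m^2 * ((k:ℝ)+1)^2) :=
          div_le_div_of_nonneg_left (by positivity) hmk0 hmx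
  -- Step E: summability
  have hmaj : Summable (fun k : ℕ => (4 * Real.pi / (3 * T)) / (m^2 * ((k:ℝ)+1)^2)) := by
    have h1 : Summable (fun k : ℕ => 1 / ((k:ℝ)+1)^2) := by
      have := (summable_nat_add_iff (f := fun n : ℕ => 1 / (n:ℝ)^2) 1).2
        (Real.summable_one_div_nat_pow.2 one_lt_two)
      simpa [add_comm] using this
    have := h1.mul_left (4 * Real.pi / (3 * T) / m^2)
    refine this.congr fun k => ?_
    field_simp
  have hSumF : Summable F := by
    rw [← summable_nat_add_iff M]
    apply Summable.of_nonneg_of_le (fun k => hFnonneg _)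
      (fun k => ?_) hmaj
    have := hbound k
    rwa [add_comm] at this
  -- Step F: choose n₀
  have htail : Tendsto (fun i => a * ∑' k, F (k + i)) atTop (nhds 0) := by
    have := (tendsto_sum_nat_add F).const_mul a
    simpa only [mul_zero] using this
  have hterm : Tendsto (fun n => a * F n) atTop (nhds 0) := by
    have := hSumF.tendsto_atTop_zero.const_mul a
    simpa only [mul_zero] using this
  obtain ⟨n₁, hn₁⟩ := eventually_atTop.1 (hterm.eventually_lt_const ht0)
  obtain ⟨n₂, hn₂⟩ := eventually_atTop.1 (htail.eventually_lt_const ht0)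
  refine ⟨max n₁ n₂, fun n hn => (hn₁ n (le_trans (le_max_left _ _) hn)).le, ?_, ?_⟩
  · have := (summable_nat_add_iff (max n₁ n₂)).2 hSumF
    exact this.congr fun n => by rw [add_comm]
  · have h := (hn₂ (max n₁ n₂) (le_max_right _ _)).le
    calc a * ∑' n : ℕ, F (max n₁ n₂ + n) = a * ∑' n : ℕ, F (n + max n₁ n₂) := by
          rw [tsum_congr fun n => by rw [add_comm]]
      _ ≤ t := h
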